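/- Let ζ ∈ [0,1] and n ≥ 0, N = 2^(L-1)(2n+1), and define Q₁, Q₂ on {0,1}^L by Q₁(s) = (n + (1+ζ)/2)/N if s has even parity and (n + (1-ζ)/2)/N otherwise, with Q₂ defined with parities swapped. Then the Chernoff information C(Q₁,Q₂) = -log(∑_s √(Q₁(s)Q₂(s))) = -log(2^(L-1)·√((2n+1)² - ζ²)/N) = -log(√(1 - ε²)) where ε = 2^(L-1)·ζ/N. -/

import Mathlib

set_option maxHeartbeats 800000
open Finset

def evenParity {L : ℕ} (s : Fin L → Bool) : Prop :=
  Even (univ.filter (fun i => s i = true)).card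

instance {L : ℕ} (s : Fin L → Bool) : Decidable (evenParity s) := by
  unfold evenParity; infer_instance

lemma parity_flip {L : ℕ} (hL : 1 ≤ L) (s : Fin L → Bool) :
    evenParity (Function.update s ⟨0, hL⟩ (!s ⟨0, hL⟩)) ↔ ¬ evenParity s := by
  set i0 : Fin L := ⟨0, hL⟩
  unfold evenParity
  by_cases h : s i0 = true
  · have hset : (univ.filter (fun i => Function.update s i0 (!s i0) i = true))
        = (univ.filter (fun i => s i = true)).erase i0 := by
      ext i
      by_cases hi : i = i0 <;> simp [Function.update, hi, h]
    rw [hset, Finset.card_erase_of_mem (by simp [h])]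
    have hpos : 1 ≤ (univ.filter (fun i => s i = true)).card :=
      Finset.card_pos.mpr ⟨i0, by simp [h]⟩
    obtain ⟨m, hm⟩ : ∃ m, (univ.filter (fun i => s i = true)).card = m + 1 :=
      ⟨_, (Nat.succ_pred_eq_of_pos hpos).symm⟩
    rw [hm]
    simp [Nat.even_add_one]
  · have hset : (univ.filter (fun i => Function.update s i0 (!s i0) i = true))
        = insert i0 (univ.filter (fun i => s i = true)) := by
      ext i
      by_cases hi : i = i0 <;> simp [Function.update, hi, h]
    rw [hset, Finset.card_insert_of_notMem (by simp [h])]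
    simp [Nat.even_add_one]

lemma sigma_invol {L : ℕ} (hL : 1 ≤ L) (s : Fin L → Bool) :
    Function.update (Function.update s ⟨0, hL⟩ (!s ⟨0, hL⟩)) ⟨0, hL⟩
      (!(Function.update s ⟨0, hL⟩ (!s ⟨0, hL⟩)) ⟨0, hL⟩) = s := by
  funext i
  by_cases hi : i = (⟨0, hL⟩ : Fin L) <;> simp [Function.update, hi]

lemma card_even_eq_card_odd {L : ℕ} (hL : 1 ≤ L) :
    (univ.filter (fun s : Fin L → Bool => evenParity s)).card
      = (univ.filter (fun s : Fin L → Bool => ¬ evenParity s)).card := by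
  apply Finset.card_nbij' (i := fun s => Function.update s ⟨0, hL⟩ (!s ⟨0, hL⟩))
    (j := fun s => Function.update s ⟨0, hL⟩ (!s ⟨0, hL⟩))
  · intro s hs
    simp only [Finset.mem_coe, mem_filter, mem_univ, true_and] at hs ⊢
    rw [parity_flip hL]; simpa using hs
  · intro s hs
    simp only [Finset.mem_coe, mem_filter, mem_univ, true_and] at hs ⊢
    rw [parity_flip hL]
    exact hs
  · intro s _; exact sigma_invol hL s
  · intro s _; exact sigma_invol hL s

lemma card_even {L : ℕ} (hL : 1 ≤ L) :
    (univ.filter (fun s : Fin L → Bool => evenParity s)).card = 2 ^ (L - 1) := by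
  have htot := Finset.card_filter_add_card_filter_not
    (s := (univ : Finset (Fin L → Bool))) (p := fun s => evenParity s)
  have hcard : (univ : Finset (Fin L → Bool)).card = 2 ^ L := by
    simp [Finset.card_univ]
  have h2 : 2 ^ L = 2 ^ (L - 1) + 2 ^ (L - 1) := by
    obtain ⟨M, rfl⟩ : ∃ M, L = M + 1 := ⟨L - 1, by omega⟩
    simp [pow_succ]; ring
  have := card_even_eq_card_odd (L := L) hL
  omega

lemma card_odd {L : ℕ} (hL : 1 ≤ L) :
    (univ.filter (fun s : Fin L → Bool => ¬ evenParity s)).card = 2 ^ (L - 1) := by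
  rw [← card_even_eq_card_odd hL, card_even hL]

theorem chernoff_noisy_closest_pair (L n : ℕ) (hL : 1 ≤ L)
    (N : ℕ) (hN : N = 2 ^ (L - 1) * (2 * n + 1))
    (ζ : ℝ) (hζ0 : 0 ≤ ζ) (hζ1 : ζ ≤ 1)
    (Q₁ Q₂ : (Fin L → Bool) → ℝ)
    (hQ₁ : ∀ s, Q₁ s = ((n : ℝ) + if evenParity s then (1 + ζ) / 2 else (1 - ζ) / 2) / N)
    (hQ₂ : ∀ s, Q₂ s = ((n : ℝ) + if evenParity s then (1 - ζ) / 2 else (1 + ζ) / 2) / N)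
    (ε : ℝ) (hε : ε = 2 ^ (L - 1) * ζ / N) :
    IsLeast
      ((fun l : ℝ => Real.log (∑ s, Q₁ s ^ l * Q₂ s ^ (1 - l))) '' Set.Icc 0 1)
      (Real.log (∑ s, Real.sqrt (Q₁ s * Q₂ s))) ∧
    (∑ s, Real.sqrt (Q₁ s * Q₂ s))
      = 2 ^ (L - 1) * Real.sqrt ((2 * n + 1 : ℝ) ^ 2 - ζ ^ 2) / N ∧
    2 ^ (L - 1) * Real.sqrt ((2 * n + 1 : ℝ) ^ 2 - ζ ^ 2) / N
      = Real.sqrt (1 - ε ^ 2) := by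
  have hNR : (N : ℝ) = 2 ^ (L - 1) * (2 * (n : ℝ) + 1) := by
    rw [hN]; push_cast; ring
  have hNpos : (0 : ℝ) < N := by
    rw [hNR]; positivity
  set a : ℝ := ((n : ℝ) + (1 + ζ) / 2) / N with ha_def
  set b : ℝ := ((n : ℝ) + (1 - ζ) / 2) / N with hb_def
  have ha : 0 < a := by
    apply div_pos _ hNpos
    have : (0:ℝ) ≤ n := Nat.cast_nonneg n
    linarith
  have hb : 0 ≤ b := by
    apply div_nonneg _ hNpos.le
    have : (0:ℝ) ≤ n := Nat.cast_nonneg n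
    linarith
  have hQ₁e : ∀ s, evenParity s → Q₁ s = a := fun s h => by rw [hQ₁ s, if_pos h]
  have hQ₁o : ∀ s, ¬ evenParity s → Q₁ s = b := fun s h => by rw [hQ₁ s, if_neg h]
  have hQ₂e : ∀ s, evenParity s → Q₂ s = b := fun s h => by rw [hQ₂ s, if_pos h]
  have hQ₂o : ∀ s, ¬ evenParity s → Q₂ s = a := fun s h => by rw [hQ₂ s, if_neg h]
  -- generic parity-sum computation
  have hsum : ∀ (g : (Fin L → Bool) → ℝ) (cE cO : ℝ),
      (∀ s, evenParity s → g s = cE) → (∀ s, ¬ evenParity s → g s = cO) →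
      ∑ s, g s = 2 ^ (L - 1) * cE + 2 ^ (L - 1) * cO := by
    intro g cE cO hE hO
    rw [← Finset.sum_filter_add_sum_filter_not univ (fun s => evenParity s)]
    rw [Finset.sum_congr rfl (fun s hs => hE s (mem_filter.mp hs).2),
        Finset.sum_congr rfl (fun s hs => hO s (mem_filter.mp hs).2),
        Finset.sum_const, Finset.sum_const, card_even hL, card_odd hL]
    push_cast [nsmul_eq_mul]
    ring
  have habN : 2 ^ (L - 1) * (a + b) = 1 := by
    rw [ha_def, hb_def]
    field_simp
    rw [hNR]; ring
  have hSval : (∑ s, Real.sqrt (Q₁ s * Q₂ s))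
      = 2 ^ (L - 1) * Real.sqrt (a * b) + 2 ^ (L - 1) * Real.sqrt (a * b) :=
    hsum _ _ _ (fun s h => by rw [hQ₁e s h, hQ₂e s h])
      (fun s h => by rw [hQ₁o s h, hQ₂o s h, mul_comm])
  have hfval : ∀ l : ℝ, (∑ s, Q₁ s ^ l * Q₂ s ^ (1 - l))
      = 2 ^ (L - 1) * (a ^ l * b ^ (1 - l)) + 2 ^ (L - 1) * (b ^ l * a ^ (1 - l)) :=
    fun l => hsum _ _ _ (fun s h => by rw [hQ₁e s h, hQ₂e s h])
      (fun s h => by rw [hQ₁o s h, hQ₂o s h])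
  have hu : (0:ℝ) ≤ (2 * n + 1 : ℝ) ^ 2 - ζ ^ 2 := by nlinarith [Nat.cast_nonneg (α := ℝ) n]
  -- sqrt (a*b)
  have hsqrtab : Real.sqrt (a * b)
      = Real.sqrt ((2 * n + 1 : ℝ) ^ 2 - ζ ^ 2) / (2 * N) := by
    have hab : a * b = ((2 * n + 1 : ℝ) ^ 2 - ζ ^ 2) / (2 * N) ^ 2 := by
      rw [ha_def, hb_def]; field_simp; ring
    rw [hab, Real.sqrt_div hu, Real.sqrt_sq (by positivity)]
  -- second equality
  have heq1 : (∑ s, Real.sqrt (Q₁ s * Q₂ s))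
      = 2 ^ (L - 1) * Real.sqrt ((2 * n + 1 : ℝ) ^ 2 - ζ ^ 2) / N := by
    rw [hSval, hsqrtab]
    field_simp
    ring
  have hc : (0:ℝ) < 2 * (n:ℝ) + 1 := by positivity
  have heq2 : 2 ^ (L - 1) * Real.sqrt ((2 * n + 1 : ℝ) ^ 2 - ζ ^ 2) / N
      = Real.sqrt (1 - ε ^ 2) := by
    have hεval : ε = ζ / (2 * (n:ℝ) + 1) := by
      rw [hε, hNR]; field_simp
    have h1 : 1 - ε ^ 2 = ((2 * (n:ℝ) + 1) ^ 2 - ζ ^ 2) / (2 * (n:ℝ) + 1) ^ 2 := by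
      rw [hεval]; field_simp
    rw [h1, Real.sqrt_div hu, Real.sqrt_sq hc.le, hNR]
    field_simp
  refine ⟨⟨⟨1/2, ⟨by norm_num, by norm_num⟩, ?_⟩, ?_⟩, heq1, heq2⟩
  · -- membership : f (1/2) has log equal to log S
    simp only
    congr 1
    rw [hfval, hSval]
    have h12 : (1:ℝ) - 1/2 = 1/2 := by norm_num
    rw [h12]
    rw [Real.sqrt_mul ha.le, Real.sqrt_eq_rpow, Real.sqrt_eq_rpow]
    ring
  · -- lower bound
    rintro y ⟨l, hl, rfl⟩
    simp only
    rw [hfval, hSval]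
    rcases eq_or_lt_of_le hb with hb0 | hbpos
    · -- b = 0 : both sides have log zero
      have hb0 : b = 0 := hb0.symm
      have hS0 : 2 ^ (L - 1) * Real.sqrt (a * b) + 2 ^ (L - 1) * Real.sqrt (a * b) = 0 := by
        rw [hb0]; simp
      rw [hS0, Real.log_zero]
      rcases eq_or_lt_of_le hl.1 with h0 | h0
      · rw [← h0]
        simp only [Real.rpow_zero, sub_zero, Real.rpow_one, one_mul, mul_one]
        rw [show 2 ^ (L - 1) * b + 2 ^ (L - 1) * a = 2 ^ (L-1) * (a + b) by ring, habN,
          Real.log_one]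
      · rcases eq_or_lt_of_le hl.2 with h1 | h1
        · rw [h1]
          simp only [Real.rpow_one, sub_self, Real.rpow_zero, one_mul, mul_one]
          rw [show 2 ^ (L - 1) * a + 2 ^ (L - 1) * b = 2 ^ (L-1) * (a + b) by ring, habN,
            Real.log_one]
        · have hz1 : b ^ (1 - l) = 0 := by
            rw [hb0, Real.zero_rpow (by linarith)]
          have hz2 : b ^ l = 0 := by
            rw [hb0, Real.zero_rpow (ne_of_gt h0)]
          rw [hz1, hz2]
          simp
    · -- b > 0
      have key : 2 * Real.sqrt (a * b) ≤ a ^ l * b ^ (1 - l) + b ^ l * a ^ (1 - l) := by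
        set u := a ^ l * b ^ (1 - l) with hu_def
        set v := b ^ l * a ^ (1 - l) with hv_def
        have hupos : 0 < u := by
          rw [hu_def]
          exact mul_pos (Real.rpow_pos_of_pos ha l) (Real.rpow_pos_of_pos hbpos (1 - l))
        have hvpos : 0 < v := by
          rw [hv_def]
          exact mul_pos (Real.rpow_pos_of_pos hbpos l) (Real.rpow_pos_of_pos ha (1 - l))
        have h1 : a ^ l * a ^ (1 - l) = a := by
          rw [← Real.rpow_add ha]; norm_num
        have h2 : b ^ (1 - l) * b ^ l = b := by
          rw [← Real.rpow_add hbpos]; norm_num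
        have huv : u * v = a * b := by
          calc u * v = (a ^ l * a ^ (1 - l)) * (b ^ (1 - l) * b ^ l) := by
                rw [hu_def, hv_def]; ring
            _ = a * b := by rw [h1, h2]
        have hsq := sq_nonneg (Real.sqrt u - Real.sqrt v)
        have e1 := Real.sq_sqrt hupos.le
        have e2 := Real.sq_sqrt hvpos.le
        have e3 : Real.sqrt (a * b) = Real.sqrt u * Real.sqrt v := by
          rw [← huv, Real.sqrt_mul hupos.le]
        nlinarith [Real.sqrt_nonneg u, Real.sqrt_nonneg v]
      apply Real.log_le_log
      · have : 0 < Real.sqrt (a * b) := Real.sqrt_pos.mpr (mul_pos ha hbpos)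
        positivity
      · have h2p : (0:ℝ) ≤ 2 ^ (L - 1) := by positivity
        have := mul_le_mul_of_nonneg_left key h2p
        linarith
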